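/- Let α, β > 0 and let L be the real 4×4 matrix L = [[0,0,1,0],[0,0,0,1],[2α,0,0,2],[0,2β,−2,0]] (the linearization of the planar electromagnetic toy model at the origin). Then L, viewed as a complex matrix, is diagonalizable and all of its complex eigenvalues are purely imaginary if and only if √α + √β < √2. -/

import Mathlib

open Matrix

/-- The linearization of the planar electromagnetic toy model at the origin. -/
noncomputable def toyL (α β : ℝ) : Matrix (Fin 4) (Fin 4) ℝ :=
  !![0, 0, 1, 0;
     0, 0, 0, 1;
     2*α, 0, 0, 2;
     0, 2*β, -2, 0]

/-- `toyL` viewed as a complex matrix. -/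
noncomputable def toyLC (α β : ℝ) : Matrix (Fin 4) (Fin 4) ℂ :=
  (toyL α β).map (algebraMap ℝ ℂ)

/-- A square complex matrix is diagonalizable if it is conjugate to a diagonal matrix. -/
def IsDiagonalizableC {N : ℕ} (A : Matrix (Fin N) (Fin N) ℂ) : Prop :=
  ∃ P : Matrix (Fin N) (Fin N) ℂ, IsUnit P ∧ (P⁻¹ * A * P).IsDiag

/-! ### Auxiliary lemmas -/

lemma toy_charAux (α β : ℝ) (μ : ℂ) :
    (μ • (1 : Matrix (Fin 4) (Fin 4) ℂ) - toyLC α β).det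
      = μ^4 + (4 - 2*α - 2*β) * μ^2 + 4*α*β := by
  have h : μ • (1 : Matrix (Fin 4) (Fin 4) ℂ) - toyLC α β
      = !![μ, 0, -1, 0; 0, μ, 0, -1; -(2*α), 0, μ, -2; 0, -(2*β), 2, μ] := by
    ext i j
    fin_cases i <;> fin_cases j <;>
      simp [toyLC, toyL, Matrix.one_apply] <;> ring
  rw [h]
  rw [Matrix.det_succ_row_zero]
  simp [Fin.sum_univ_succ, Matrix.det_fin_three, Fin.succAbove]
  ring

lemma toy_mem_spectrum_iff (α β : ℝ) (μ : ℂ) :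
    μ ∈ spectrum ℂ (toyLC α β) ↔ μ^4 + (4 - 2*α - 2*β) * μ^2 + 4*α*β = 0 := by
  rw [spectrum.mem_iff, Matrix.isUnit_iff_isUnit_det, isUnit_iff_ne_zero, not_not]
  rw [Algebra.algebraMap_eq_smul_one, ← toy_charAux α β μ]

noncomputable def evec (a : ℝ) (l : ℂ) : Fin 4 → ℂ := ![2*l, l^2-2*a, 2*l^2, l^3-2*a*l]

noncomputable def eigD (w1 w2 : ℝ) : Fin 4 → ℂ :=
  ![Complex.I*w1, -(Complex.I*w1), Complex.I*w2, -(Complex.I*w2)]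

noncomputable def eigV (a w1 w2 : ℝ) : Matrix (Fin 4) (Fin 4) ℂ :=
  Matrix.of fun i j => evec a (eigD w1 w2 j) i

lemma detEigV (a w1 w2 : ℝ) :
    (eigV a w1 w2).det = -32*(a:ℂ)*w1*w2*((w2:ℂ)^2-(w1:ℂ)^2)^2 := by
  rw [show (eigV a w1 w2) = !![2*(Complex.I*w1), 2*(-(Complex.I*w1)), 2*(Complex.I*w2), 2*(-(Complex.I*w2));
      (Complex.I*w1)^2-2*a, (-(Complex.I*w1))^2-2*a, (Complex.I*w2)^2-2*a, (-(Complex.I*w2))^2-2*a;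
      2*(Complex.I*w1)^2, 2*(-(Complex.I*w1))^2, 2*(Complex.I*w2)^2, 2*(-(Complex.I*w2))^2;
      (Complex.I*w1)^3-2*a*(Complex.I*w1), (-(Complex.I*w1))^3-2*a*(-(Complex.I*w1)),
        (Complex.I*w2)^3-2*a*(Complex.I*w2), (-(Complex.I*w2))^3-2*a*(-(Complex.I*w2))] from by
    ext i j; fin_cases i <;> fin_cases j <;> simp [eigV, evec, eigD]]
  rw [Matrix.det_succ_row_zero]
  simp [Fin.sum_univ_succ, Matrix.det_fin_three, Fin.succAbove, Fin.castSucc,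
    Fin.castAdd, Fin.castLE]
  linear_combination (32*(a:ℂ)*w1*w2*((w2:ℂ)^2-(w1:ℂ)^2)^2*(1 - Complex.I^2 + Complex.I^4))
    * Complex.I_sq

lemma evec_eigen (α β : ℝ) (l : ℂ) (h : l^4 + (4-2*(α:ℂ)-2*β)*l^2 + 4*α*β = 0) :
    (toyLC α β).mulVec (evec α l) = l • evec α l := by
  funext i
  fin_cases i <;>
    simp [toyLC, toyL, Matrix.mulVec, dotProduct, evec, Fin.sum_univ_four] <;>
    first | ring1 | linear_combination -h | linear_combination h

lemma quartic_I (α β w : ℝ) (hq : w^4 - (4-2*α-2*β)*w^2 + 4*(α*β) = 0) (l : ℂ)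
    (hl : l = Complex.I*w ∨ l = -(Complex.I*w)) :
    l^4 + (4-2*(α:ℂ)-2*β)*l^2 + 4*α*β = 0 := by
  have hqc : (w:ℂ)^4 - (4-2*(α:ℂ)-2*β)*(w:ℂ)^2 + 4*(α*β) = 0 := by
    have := congrArg Complex.ofReal hq
    push_cast at this
    linear_combination this
  rcases hl with rfl | rfl <;>
    linear_combination hqc + ((w:ℂ)^4*(Complex.I^2-1) + (4-2*(α:ℂ)-2*β)*(w:ℂ)^2) * Complex.I_sq

lemma re_zero_of_sq (μ : ℂ) (w : ℝ) (hw : 0 < w) (h : μ^2 = -((w:ℂ)^2)) : μ.re = 0 := by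
  have h2 : μ.re * μ.im + μ.im * μ.re = 0 := by
    have := congrArg Complex.im h
    simpa [pow_two, Complex.mul_im] using this
  have h1 : μ.re * μ.re - μ.im * μ.im = -(w^2) := by
    have := congrArg Complex.re h
    simpa [pow_two, Complex.mul_re] using this
  by_contra hre
  have him : μ.im = 0 := by
    have hmm : μ.re * μ.im = 0 := by linarith
    rcases mul_eq_zero.mp hmm with hh | hh
    · exact absurd hh hre
    · exact hh
  rw [him] at h1
  nlinarith [sq_nonneg μ.re, sq_nonneg w]

lemma toyLC_sq_apply (α β : ℝ) : (toyLC α β * toyLC α β) 0 0 = 2*α := by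
  simp [toyLC, toyL, Matrix.mul_apply, Fin.sum_univ_four]

/-! ### Forward direction -/

lemma forward (α β : ℝ) (hα : 0 < α) (hβ : 0 < β)
    (h : Real.sqrt α + Real.sqrt β < Real.sqrt 2) :
    IsDiagonalizableC (toyLC α β) ∧ ∀ μ ∈ spectrum ℂ (toyLC α β), μ.re = 0 := by
  have hsa := Real.sq_sqrt hα.le
  have hsb := Real.sq_sqrt hβ.le
  have hs2 := Real.sq_sqrt (by norm_num : (0:ℝ) ≤ 2)
  have hab : α + β + 2*Real.sqrt (α*β) < 2 := by
    have h2 : (Real.sqrt α + Real.sqrt β)^2 < (Real.sqrt 2)^2 := by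
      apply pow_lt_pow_left₀ h (by positivity)
      norm_num
    rw [Real.sqrt_mul hα.le]
    nlinarith [Real.sqrt_nonneg α, Real.sqrt_nonneg β]
  have habnn : (0:ℝ) ≤ Real.sqrt (α*β) := Real.sqrt_nonneg _
  have hab2 : Real.sqrt (α*β)^2 = α*β := Real.sq_sqrt (by positivity)
  have hdisc : 0 < (2-α-β)^2 - 4*(α*β) := by nlinarith
  set s := Real.sqrt ((2-α-β)^2 - 4*(α*β)) with hs_def
  have hss : s^2 = (2-α-β)^2 - 4*(α*β) := Real.sq_sqrt hdisc.le
  have hs_pos : 0 < s := Real.sqrt_pos.mpr hdisc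
  have hslt : s < 2-α-β := by nlinarith
  set w1 := Real.sqrt (2-α-β-s) with hw1_def
  set w2 := Real.sqrt (2-α-β+s) with hw2_def
  have hw1sq : w1^2 = 2-α-β-s := Real.sq_sqrt (by linarith)
  have hw2sq : w2^2 = 2-α-β+s := Real.sq_sqrt (by linarith)
  have hw1pos : 0 < w1 := Real.sqrt_pos.mpr (by linarith)
  have hw2pos : 0 < w2 := Real.sqrt_pos.mpr (by linarith)
  have hwne : w1^2 ≠ w2^2 := by rw [hw1sq, hw2sq]; intro hc; linarith
  have hq1 : w1^4 - (4-2*α-2*β)*w1^2 + 4*(α*β) = 0 := by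
    rw [show w1^4 = (w1^2)^2 by ring, hw1sq]; linear_combination hss
  have hq2 : w2^4 - (4-2*α-2*β)*w2^2 + 4*(α*β) = 0 := by
    rw [show w2^4 = (w2^2)^2 by ring, hw2sq]; linear_combination hss
  -- each eigD entry satisfies the quartic
  have hquart : ∀ j : Fin 4,
      (eigD w1 w2 j)^4 + (4-2*(α:ℂ)-2*β)*(eigD w1 w2 j)^2 + 4*α*β = 0 := by
    intro j
    fin_cases j
    · exact quartic_I α β w1 hq1 _ (Or.inl rfl)
    · exact quartic_I α β w1 hq1 _ (Or.inr rfl)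
    · exact quartic_I α β w2 hq2 _ (Or.inl rfl)
    · exact quartic_I α β w2 hq2 _ (Or.inr rfl)
  have hAP : toyLC α β * eigV α w1 w2
      = eigV α w1 w2 * Matrix.diagonal (eigD w1 w2) := by
    ext i j
    have h1 := congrFun (evec_eigen α β (eigD w1 w2 j) (hquart j)) i
    simp only [Matrix.mulVec, dotProduct, Pi.smul_apply, smul_eq_mul] at h1
    rw [Matrix.mul_apply, Matrix.mul_diagonal]
    simpa [eigV, mul_comm] using h1
  have hdet : (eigV α w1 w2).det ≠ 0 := by
    rw [detEigV]
    have hne : w2^2 - w1^2 ≠ 0 := sub_ne_zero.mpr (Ne.symm hwne)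
    have h0 : (-32*α*w1*w2*(w2^2-w1^2)^2 : ℝ) ≠ 0 := by
      apply mul_ne_zero
      apply mul_ne_zero
      apply mul_ne_zero
      apply mul_ne_zero
      · norm_num
      · exact hα.ne'
      · exact hw1pos.ne'
      · exact hw2pos.ne'
      · exact pow_ne_zero 2 hne
    have hcast : (-32*(α:ℂ)*w1*w2*((w2:ℂ)^2-(w1:ℂ)^2)^2)
        = ((-32*α*w1*w2*(w2^2-w1^2)^2 : ℝ) : ℂ) := by push_cast; ring
    rw [hcast]
    exact_mod_cast h0
  have hPunit : IsUnit (eigV α w1 w2) :=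
    (Matrix.isUnit_iff_isUnit_det _).mpr (isUnit_iff_ne_zero.mpr hdet)
  have hinv : (eigV α w1 w2)⁻¹ * eigV α w1 w2 = 1 :=
    Matrix.nonsing_inv_mul _ (isUnit_iff_ne_zero.mpr hdet)
  constructor
  · refine ⟨eigV α w1 w2, hPunit, ?_⟩
    have hconj : (eigV α w1 w2)⁻¹ * toyLC α β * eigV α w1 w2
        = Matrix.diagonal (eigD w1 w2) := by
      rw [Matrix.mul_assoc, hAP, ← Matrix.mul_assoc, hinv, Matrix.one_mul]
    rw [hconj]
    exact Matrix.isDiag_diagonal _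
  · intro mu hmu
    rw [toy_mem_spectrum_iff] at hmu
    have hsumR : w1^2 + w2^2 = 4-2*α-2*β := by rw [hw1sq, hw2sq]; ring
    have hprodR : w1^2 * w2^2 = 4*(α*β) := by
      rw [hw1sq, hw2sq]; linear_combination -hss
    have hsum : ((w1:ℂ)^2 + (w2:ℂ)^2) = 4-2*(α:ℂ)-2*β := by
      have := congrArg Complex.ofReal hsumR
      push_cast at this
      linear_combination this
    have hprod : ((w1:ℂ)^2 * (w2:ℂ)^2) = 4*(α:ℂ)*β := by
      have := congrArg Complex.ofReal hprodR
      push_cast at this ⊢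
      linear_combination this
    have hfac : (mu^2 + (w1:ℂ)^2) * (mu^2 + (w2:ℂ)^2) = 0 := by
      linear_combination hmu + mu^2*hsum + hprod
    rcases mul_eq_zero.mp hfac with hf | hf
    · exact re_zero_of_sq mu w1 hw1pos (by linear_combination hf)
    · exact re_zero_of_sq mu w2 hw2pos (by linear_combination hf)

/-! ### Reverse direction -/

lemma reverse (α β : ℝ) (hα : 0 < α) (hβ : 0 < β)
    (hcond : IsDiagonalizableC (toyLC α β) ∧ ∀ μ ∈ spectrum ℂ (toyLC α β), μ.re = 0) :
    Real.sqrt α + Real.sqrt β < Real.sqrt 2 := by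
  obtain ⟨hdiag, him⟩ := hcond
  by_contra hge
  push_neg at hge
  have hsa := Real.sq_sqrt hα.le
  have hsb := Real.sq_sqrt hβ.le
  have hs2 := Real.sq_sqrt (by norm_num : (0:ℝ) ≤ 2)
  have hab2 : Real.sqrt (α*β)^2 = α*β := Real.sq_sqrt (by positivity)
  have habnn : (0:ℝ) ≤ Real.sqrt (α*β) := Real.sqrt_nonneg _
  have h2 : 2 - α - β ≤ 2*Real.sqrt (α*β) := by
    have hsq : (Real.sqrt 2)^2 ≤ (Real.sqrt α + Real.sqrt β)^2 := by
      apply pow_le_pow_left₀ (Real.sqrt_nonneg 2) hge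
    rw [Real.sqrt_mul hα.le] at *
    nlinarith [Real.sqrt_nonneg α, Real.sqrt_nonneg β]
  rcases lt_or_ge ((2-α-β)^2) (4*(α*β)) with hlt | hge2
  · -- complex quadratic roots : eigenvalue with nonzero real part
    set u := Real.sqrt (4*(α*β) - (2-α-β)^2) with hu_def
    have hu2 : u^2 = 4*(α*β) - (2-α-β)^2 := Real.sq_sqrt (by linarith)
    have hupos : 0 < u := Real.sqrt_pos.mpr (by linarith)
    set μ0 : ℂ := ((α+β-2 : ℝ) : ℂ) + (u:ℂ)*Complex.I with hmu0_def
    have huC : (u:ℂ)^2 = 4*(α:ℂ)*β - (2-(α:ℂ)-β)^2 := by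
      have := congrArg Complex.ofReal hu2
      push_cast at this
      linear_combination this
    have hq0 : μ0^2 + (4-2*(α:ℂ)-2*β)*μ0 + 4*α*β = 0 := by
      rw [hmu0_def]
      push_cast
      linear_combination (u:ℂ)^2 * Complex.I_sq - huC
    obtain ⟨l, hl⟩ := IsAlgClosed.exists_pow_nat_eq μ0 (by norm_num : 0 < 2)
    have hlspec : l ∈ spectrum ℂ (toyLC α β) := by
      rw [toy_mem_spectrum_iff]
      linear_combination (l^2 + μ0 + (4-2*(α:ℂ)-2*β)) * hl + hq0
    have hre : l.re = 0 := him l hlspec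
    have him0 : μ0.im = 0 := by
      have := congrArg Complex.im hl
      simpa [pow_two, Complex.mul_im, hre] using this.symm
    have : μ0.im = u := by simp [hmu0_def]
    rw [this] at him0
    exact absurd him0 hupos.ne'
  · -- real discriminant : need a positive real eigenvalue or the degenerate case
    rcases lt_trichotomy (2-α-β) 0 with hneg | hzero | hpos
    · -- positive real eigenvalue
      set s := Real.sqrt ((2-α-β)^2 - 4*(α*β)) with hs_def
      have hss : s^2 = (2-α-β)^2 - 4*(α*β) := Real.sq_sqrt (by linarith)
      have hsnn : 0 ≤ s := Real.sqrt_nonneg _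
      set m := (α+β-2) + s with hm_def
      have hmpos : 0 < m := by simp only [hm_def]; linarith
      have hqm : m^2 + (4-2*α-2*β)*m + 4*(α*β) = 0 := by
        simp only [hm_def]; linear_combination hss
      set l := Real.sqrt m with hl_def
      have hl2 : l^2 = m := Real.sq_sqrt hmpos.le
      have hlpos : 0 < l := Real.sqrt_pos.mpr hmpos
      have hlspec : (l:ℂ) ∈ spectrum ℂ (toyLC α β) := by
        rw [toy_mem_spectrum_iff]
        have hq : l^4 + (4-2*α-2*β)*l^2 + 4*(α*β) = 0 := by
          rw [show l^4 = (l^2)^2 by ring, hl2]; linear_combination hqm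
        have := congrArg Complex.ofReal hq
        push_cast at this
        linear_combination this
      have := him l hlspec
      simp at this
      exact absurd this hlpos.ne'
    · nlinarith
    · -- degenerate case : equality, not diagonalizable
      have heq : (2-α-β)^2 = 4*(α*β) := by nlinarith
      have heqC : (2-(α:ℂ)-β)^2 = 4*((α:ℂ)*β) := by
        have := congrArg Complex.ofReal heq
        push_cast at this
        linear_combination this
      obtain ⟨P, hP, hD⟩ := hdiag
      have hPd : IsUnit P.det := (Matrix.isUnit_iff_isUnit_det P).mp hP
      have hPinv : P * P⁻¹ = 1 := Matrix.mul_nonsing_inv P hPd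
      have hPinv' : P⁻¹ * P = 1 := Matrix.nonsing_inv_mul P hPd
      obtain ⟨M, hD, hAeq⟩ : ∃ M : Matrix (Fin 4) (Fin 4) ℂ, M.IsDiag ∧
          toyLC α β = P * M * P⁻¹ := by
        refine ⟨P⁻¹ * toyLC α β * P, hD, ?_⟩
        rw [Matrix.mul_assoc, Matrix.mul_assoc, Matrix.mul_assoc, hPinv, Matrix.mul_one,
          ← Matrix.mul_assoc, hPinv, Matrix.one_mul]
      have hMdiag : Matrix.diagonal M.diag = M := hD.diagonal_diag
      have hdsq : ∀ i : Fin 4, (M i i)^2 = -(2-(α:ℂ)-β) := by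
        intro i
        have hconj : (M i i) • (1 : Matrix (Fin 4) (Fin 4) ℂ) - toyLC α β
            = P * ((M i i) • (1 : Matrix (Fin 4) (Fin 4) ℂ) - M) * P⁻¹ := by
          rw [hAeq, Matrix.mul_sub, Matrix.sub_mul, Matrix.mul_smul, Matrix.mul_one,
            Matrix.smul_mul, hPinv]
        have hdet0 : ((M i i) • (1 : Matrix (Fin 4) (Fin 4) ℂ) - toyLC α β).det = 0 := by
          rw [hconj, Matrix.det_mul, Matrix.det_mul, Matrix.det_nonsing_inv]
          have hdiagform : (M i i) • (1 : Matrix (Fin 4) (Fin 4) ℂ) - M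
              = Matrix.diagonal (fun j => M i i - M j j) := by
            rw [← hMdiag]
            ext a b
            by_cases hab : a = b <;>
              simp [Matrix.diagonal, Matrix.one_apply, hab]
          rw [hdiagform, Matrix.det_diagonal]
          rw [Finset.prod_eq_zero (Finset.mem_univ i) (by simp)]
          ring
        rw [toy_charAux] at hdet0
        have hcast : ((M i i)^2 + (2-(α:ℂ)-β))^2 = 0 := by
          linear_combination hdet0 + heqC
        have := pow_eq_zero_iff (n := 2) (by norm_num) |>.mp hcast
        linear_combination this
      have hMM : M * M = (-(2-(α:ℂ)-β)) • (1 : Matrix (Fin 4) (Fin 4) ℂ) := by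
        have h1 : (-(2-(α:ℂ)-β)) • (1 : Matrix (Fin 4) (Fin 4) ℂ)
            = Matrix.diagonal (fun _ => -(2-(α:ℂ)-β)) := by
          ext a b
          by_cases hab : a = b <;> simp [Matrix.one_apply, hab]
        rw [h1, ← hMdiag, Matrix.diagonal_mul_diagonal]
        have h2' : (fun j => M.diag j * M.diag j) = fun _ : Fin 4 => -(2-(α:ℂ)-β) := by
          funext j
          have := hdsq j
          simpa [Matrix.diag, pow_two] using this
        rw [h2']
      have hAA : toyLC α β * toyLC α β
          = (-(2-(α:ℂ)-β)) • (1 : Matrix (Fin 4) (Fin 4) ℂ) := by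
        rw [hAeq]
        rw [show P * M * P⁻¹ * (P * M * P⁻¹) = P * (M * (P⁻¹ * P) * M) * P⁻¹ by
          simp [Matrix.mul_assoc]]
        rw [hPinv', Matrix.mul_one, hMM]
        rw [Matrix.mul_smul, Matrix.smul_mul, Matrix.mul_one, hPinv]
      have hentry := congrFun (congrFun hAA 0) 0
      rw [toyLC_sq_apply α β] at hentry
      have hfin : (2*(α:ℂ)) = -(2-(α:ℂ)-β) := by
        rw [hentry]
        simp [Matrix.one_apply]
      have hre := congrArg Complex.re hfin
      simp [Complex.ofReal_re] at hre
      linarith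

theorem stmt_0 (α β : ℝ) (hα : 0 < α) (hβ : 0 < β) :
    (IsDiagonalizableC (toyLC α β) ∧ ∀ μ ∈ spectrum ℂ (toyLC α β), μ.re = 0) ↔
      Real.sqrt α + Real.sqrt β < Real.sqrt 2 := by
  exact ⟨reverse α β hα hβ, forward α β hα hβ⟩
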